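/- (Unisolvence of the Lagrange finite element of type 3.) Let B₁, B₂, B₃ ∈ ℝ² be affinely independent. For each multi-index α ∈ ℕ³ with |α| = 3, let ξ_α = (α₁B₁ + α₂B₂ + α₃B₃)/3 (these are 10 points: the three vertices, the six points of the form (2B_i + B_j)/3 with i ≠ j, and the centroid). Then for any prescribed values (y_α), there exists a unique bivariate polynomial function p : ℝ² → ℝ of total degree ≤ 3 such that p(ξ_α) = y_α for all |α| = 3. Equivalently, a polynomial of degree ≤ 3 vanishing at all 10 points ξ_α is identically zero. -/

import Mathlib

open Finset

/-- The trivariate Bernstein polynomial `B_a^d(l) = (d!/(a₁!a₂!a₃!)) l₁^{a₁} l₂^{a₂} l₃^{a₃}`. -/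
noncomputable def Bern (d : ℕ) (a : Fin 3 → ℕ) (l : Fin 3 → ℝ) : ℝ :=
  ((Nat.factorial d : ℝ) /
      ((Nat.factorial (a 0) : ℝ) * (Nat.factorial (a 1) : ℝ) * (Nat.factorial (a 2) : ℝ))) *
    (l 0 ^ a 0 * l 1 ^ a 1 * l 2 ^ a 2)

/-- The `k`-th standard basis multi-index `ε_k` of `ℕ³`. -/
def eps (k : Fin 3) : Fin 3 → ℕ := fun j => if j = k then 1 else 0

/-- The univariate Bernstein polynomial `B_k^n(t) = (n choose k) t^k (1-t)^{n-k}`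
(automatically `0` when `k > n`). -/
noncomputable def bern1 (n k : ℕ) (t : ℝ) : ℝ :=
  (Nat.choose n k : ℝ) * t ^ k * (1 - t) ^ (n - k)

section Aux15

open MvPolynomial

private lemma prod_add_one15 (n : ℕ) :
    ∏ j ∈ Finset.range n, ((j : ℝ) + 1) = (Nat.factorial n : ℝ) := by
  induction n with
  | zero => simp
  | succ n ih => rw [Finset.prod_range_succ, ih, Nat.factorial_succ]; push_cast; ring

private lemma prod_sub_cast15 (n : ℕ) :
    ∏ r ∈ Finset.range n, ((n : ℝ) - (r : ℝ)) = (Nat.factorial n : ℝ) := by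
  rw [← Finset.prod_range_reflect, ← prod_add_one15 n]
  refine Finset.prod_congr rfl fun j hj => ?_
  rw [Finset.mem_range] at hj
  rw [Nat.sub_sub, Nat.cast_sub (by omega : 1 + j ≤ n), Nat.cast_add, Nat.cast_one]
  ring

private lemma det_ne15 (B : Fin 3 → (Fin 2 → ℝ)) (hB : AffineIndependent ℝ B) :
    (B 0 0 - B 2 0) * (B 1 1 - B 2 1) - (B 0 1 - B 2 1) * (B 1 0 - B 2 0) ≠ 0 := by
  intro hD
  have hinj : B 0 ≠ B 2 := fun h => absurd (hB.injective h) (by decide)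
  have hv : B 0 0 - B 2 0 ≠ 0 ∨ B 0 1 - B 2 1 ≠ 0 := by
    by_contra h
    push_neg at h
    refine hinj (funext fun j => ?_)
    fin_cases j <;> simp only [Fin.mk_zero, Fin.mk_one] <;> [linarith [h.1]; linarith [h.2]]
  obtain ⟨c0, c1, hc, hz0, hz1⟩ : ∃ c0 c1 : ℝ, (c0 ≠ 0 ∨ c1 ≠ 0) ∧
      (c0 * (B 0 0 - B 2 0) + c1 * (B 1 0 - B 2 0) = 0) ∧
      (c0 * (B 0 1 - B 2 1) + c1 * (B 1 1 - B 2 1) = 0) := by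
    rcases hv with h | h
    · exact ⟨-(B 1 0 - B 2 0), B 0 0 - B 2 0, Or.inr h, by ring, by linear_combination hD⟩
    · exact ⟨B 1 1 - B 2 1, -(B 0 1 - B 2 1), Or.inr (neg_ne_zero.mpr h), by linear_combination hD,
        by ring⟩
  have key := affineIndependent_iff.mp hB Finset.univ ![c0, c1, -c0 - c1]
  have hsum : ∑ e ∈ Finset.univ, (![c0, c1, -c0 - c1]) e = 0 := by
    rw [Fin.sum_univ_three]
    simp only [Matrix.cons_val_zero, Matrix.cons_val_one, Matrix.head_cons, Matrix.cons_val_two,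
      Matrix.tail_cons]
    ring
  have hcomb : ∑ e : Fin 3, (![c0, c1, -c0 - c1]) e • B e = 0 := by
    rw [Fin.sum_univ_three]
    funext j
    simp only [Matrix.cons_val_zero, Matrix.cons_val_one, Matrix.head_cons, Matrix.cons_val_two,
      Matrix.tail_cons, Pi.add_apply, Pi.smul_apply, smul_eq_mul, Pi.zero_apply]
    fin_cases j <;> simp only [Fin.mk_zero, Fin.mk_one] <;> [linarith [hz0]; linarith [hz1]]
  have hall := key hsum hcomb
  rcases hc with h | h
  · exact h (by simpa using hall 0 (Finset.mem_univ _))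
  · exact h (by simpa using hall 1 (Finset.mem_univ _))

/-- Lagrange cardinal functions on the reference triangle. -/
noncomputable def Lg15 (a : Fin 3 → ℕ) (s t : ℝ) : ℝ :=
  (1 / ((Nat.factorial (a 0) : ℝ) * (Nat.factorial (a 1)) * (Nat.factorial (a 2)))) *
    ((∏ r ∈ Finset.range (a 0), (3 * s - r)) * (∏ r ∈ Finset.range (a 1), (3 * t - r)) *
      (∏ r ∈ Finset.range (a 2), (3 * (1 - s - t) - r)))

private lemma interp15 (b00 b01 b10 b11 b20 b21 s t : ℝ) (i j : ℕ) (hij : i + j ≤ 3) :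
    (s*b00 + t*b10 + (1-s-t)*b20)^i * (s*b01 + t*b11 + (1-s-t)*b21)^j
    = ∑ a ∈ Finset.Nat.antidiagonalTuple 3 3,
        (((a 0:ℝ)/3*b00 + (a 1:ℝ)/3*b10 + (a 2:ℝ)/3*b20)^i *
         ((a 0:ℝ)/3*b01 + (a 1:ℝ)/3*b11 + (a 2:ℝ)/3*b21)^j) * Lg15 a s t := by
  rw [show (Finset.Nat.antidiagonalTuple 3 3) =
    {![0,0,3], ![0,1,2], ![0,2,1], ![0,3,0], ![1,0,2], ![1,1,1], ![1,2,0], ![2,0,1], ![2,1,0],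
      ![3,0,0]} from by decide]
  repeat rw [Finset.sum_insert (by decide)]
  rw [Finset.sum_singleton]
  have hi : i ≤ 3 := by omega
  have hj : j ≤ 3 := by omega
  interval_cases i <;> interval_cases j <;>
    first
    | omega
    | (simp only [Lg15, Finset.prod_range_succ, Finset.prod_range_zero, Matrix.cons_val_zero,
        Matrix.cons_val_one, Matrix.head_cons, Matrix.cons_val_two, Matrix.tail_cons,
        Nat.factorial]
       push_cast
       ring)

private lemma eval_repr15 (q : MvPolynomial (Fin 2) ℝ) (x : Fin 2 → ℝ) :
    eval x q = ∑ d ∈ q.support, coeff d q * ((x 0) ^ (d 0) * (x 1) ^ (d 1)) := by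
  rw [eval_eq']
  refine Finset.sum_congr rfl fun d _ => ?_
  rw [Fin.prod_univ_two]

private lemma deg_bound15 (q : MvPolynomial (Fin 2) ℝ) (hq : q.totalDegree ≤ 3)
    {d : Fin 2 →₀ ℕ} (hd : d ∈ q.support) : d 0 + d 1 ≤ 3 := by
  have h1 := MvPolynomial.le_totalDegree hd
  have h2 : (d.sum fun _ e => e) = d 0 + d 1 := by
    rw [Finsupp.sum_fintype _ _ (fun _ => rfl), Fin.sum_univ_two]
  omega

private lemma vanish15 (b00 b01 b10 b11 b20 b21 : ℝ) (q : MvPolynomial (Fin 2) ℝ)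
    (hq : q.totalDegree ≤ 3)
    (h0 : ∀ a ∈ Finset.Nat.antidiagonalTuple 3 3,
      eval ![(a 0:ℝ)/3*b00 + (a 1:ℝ)/3*b10 + (a 2:ℝ)/3*b20,
             (a 0:ℝ)/3*b01 + (a 1:ℝ)/3*b11 + (a 2:ℝ)/3*b21] q = 0)
    (s t : ℝ) :
    eval ![s*b00 + t*b10 + (1-s-t)*b20, s*b01 + t*b11 + (1-s-t)*b21] q = 0 := by
  rw [eval_repr15]
  have step : ∀ d ∈ q.support,
      coeff d q * ((![s*b00 + t*b10 + (1-s-t)*b20, s*b01 + t*b11 + (1-s-t)*b21] 0) ^ (d 0) *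
        (![s*b00 + t*b10 + (1-s-t)*b20, s*b01 + t*b11 + (1-s-t)*b21] 1) ^ (d 1)) =
      ∑ a ∈ Finset.Nat.antidiagonalTuple 3 3,
        (coeff d q * (((a 0:ℝ)/3*b00 + (a 1:ℝ)/3*b10 + (a 2:ℝ)/3*b20) ^ (d 0) *
          ((a 0:ℝ)/3*b01 + (a 1:ℝ)/3*b11 + (a 2:ℝ)/3*b21) ^ (d 1))) * Lg15 a s t := by
    intro d hd
    simp only [Matrix.cons_val_zero, Matrix.cons_val_one, Matrix.head_cons]
    rw [interp15 b00 b01 b10 b11 b20 b21 s t (d 0) (d 1) (deg_bound15 q hq hd), Finset.mul_sum]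
    exact Finset.sum_congr rfl fun a _ => by ring
  rw [Finset.sum_congr rfl step, Finset.sum_comm]
  refine Finset.sum_eq_zero fun a ha => ?_
  rw [← Finset.sum_mul]
  have h := h0 a ha
  rw [eval_repr15] at h
  simp only [Matrix.cons_val_zero, Matrix.cons_val_one, Matrix.head_cons] at h
  rw [h, zero_mul]

private lemma affdeg15 (α β γ : ℝ) :
    (C α + C β * X 0 + C γ * X 1 : MvPolynomial (Fin 2) ℝ).totalDegree ≤ 1 := by
  have h1 : (C β * X 0 : MvPolynomial (Fin 2) ℝ).totalDegree ≤ 1 :=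
    le_trans (totalDegree_mul _ _) (by simp [totalDegree_X])
  have h2 : (C γ * X 1 : MvPolynomial (Fin 2) ℝ).totalDegree ≤ 1 :=
    le_trans (totalDegree_mul _ _) (by simp [totalDegree_X])
  refine le_trans (totalDegree_add _ _) (max_le (le_trans (totalDegree_add _ _) ?_) h2)
  exact max_le (by simp) h1

end Aux15


open MvPolynomial in
theorem stmt15 (B : Fin 3 → (Fin 2 → ℝ)) (hB : AffineIndependent ℝ B)
    (y : (Fin 3 → ℕ) → ℝ) :
    ∃! p : (Fin 2 → ℝ) → ℝ,
      (∃ q : MvPolynomial (Fin 2) ℝ, q.totalDegree ≤ 3 ∧ ∀ x, p x = MvPolynomial.eval x q) ∧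
      ∀ a ∈ Finset.Nat.antidiagonalTuple 3 3,
        p (fun j => ((a 0 : ℝ) * B 0 j + (a 1 : ℝ) * B 1 j + (a 2 : ℝ) * B 2 j) / 3) = y a := by
  classical
  have hD : (B 0 0 - B 2 0) * (B 1 1 - B 2 1) - (B 0 1 - B 2 1) * (B 1 0 - B 2 0) ≠ 0 :=
    det_ne15 B hB
  set L0 : MvPolynomial (Fin 2) ℝ :=
    C ((B 2 1 * (B 1 0 - B 2 0) - B 2 0 * (B 1 1 - B 2 1)) /
        ((B 0 0 - B 2 0) * (B 1 1 - B 2 1) - (B 0 1 - B 2 1) * (B 1 0 - B 2 0))) +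
      C ((B 1 1 - B 2 1) /
        ((B 0 0 - B 2 0) * (B 1 1 - B 2 1) - (B 0 1 - B 2 1) * (B 1 0 - B 2 0))) * X 0 +
      C (-(B 1 0 - B 2 0) /
        ((B 0 0 - B 2 0) * (B 1 1 - B 2 1) - (B 0 1 - B 2 1) * (B 1 0 - B 2 0))) * X 1 with hL0
  set L1 : MvPolynomial (Fin 2) ℝ :=
    C ((B 2 0 * (B 0 1 - B 2 1) - B 2 1 * (B 0 0 - B 2 0)) /
        ((B 0 0 - B 2 0) * (B 1 1 - B 2 1) - (B 0 1 - B 2 1) * (B 1 0 - B 2 0))) +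
      C (-(B 0 1 - B 2 1) /
        ((B 0 0 - B 2 0) * (B 1 1 - B 2 1) - (B 0 1 - B 2 1) * (B 1 0 - B 2 0))) * X 0 +
      C ((B 0 0 - B 2 0) /
        ((B 0 0 - B 2 0) * (B 1 1 - B 2 1) - (B 0 1 - B 2 1) * (B 1 0 - B 2 0))) * X 1 with hL1
  set L2 : MvPolynomial (Fin 2) ℝ := C 1 - L0 - L1 with hL2
  set w : (Fin 3 → ℕ) → ℝ := fun a =>
    y a / ((Nat.factorial (a 0) : ℝ) * (Nat.factorial (a 1)) * (Nat.factorial (a 2))) with hw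
  set q : MvPolynomial (Fin 2) ℝ :=
    ∑ a ∈ Finset.Nat.antidiagonalTuple 3 3, C (w a) *
      ((∏ r ∈ Finset.range (a 0), (C 3 * L0 - C (r : ℝ))) *
       (∏ r ∈ Finset.range (a 1), (C 3 * L1 - C (r : ℝ))) *
       (∏ r ∈ Finset.range (a 2), (C 3 * L2 - C (r : ℝ)))) with hqdef
  -- degree bound
  have hfac : ∀ (L : MvPolynomial (Fin 2) ℝ), L.totalDegree ≤ 1 → ∀ n : ℕ,
      (∏ r ∈ Finset.range n, (C 3 * L - C (r : ℝ))).totalDegree ≤ n := by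
    intro L hL n
    refine le_trans (totalDegree_finset_prod _ _) ?_
    have hone : ∀ r ∈ Finset.range n, (C 3 * L - C (r : ℝ)).totalDegree ≤ 1 := by
      intro r _
      have h1 : (C (3:ℝ) * L).totalDegree ≤ 1 := le_trans (totalDegree_mul _ _) (by simpa using hL)
      have h2 : (C ((r:ℕ):ℝ) : MvPolynomial (Fin 2) ℝ).totalDegree = 0 := totalDegree_C _
      exact le_trans (totalDegree_sub _ _) (max_le h1 (by omega))
    exact le_trans (Finset.sum_le_sum hone) (by simp)
  have hL0d : L0.totalDegree ≤ 1 := by rw [hL0]; exact affdeg15 _ _ _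
  have hL1d : L1.totalDegree ≤ 1 := by rw [hL1]; exact affdeg15 _ _ _
  have hL2d : L2.totalDegree ≤ 1 := by
    rw [hL2]
    exact le_trans (totalDegree_sub _ _)
      (max_le (le_trans (totalDegree_sub _ _) (max_le (by simp) hL0d)) hL1d)
  have hdeg : q.totalDegree ≤ 3 := by
    rw [hqdef]
    refine totalDegree_finsetSum_le fun a ha => ?_
    have hsa : a 0 + a 1 + a 2 = 3 := by
      have := Finset.Nat.mem_antidiagonalTuple.mp ha
      rwa [Fin.sum_univ_three] at this
    have h0 := hfac L0 hL0d (a 0)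
    have h1 := hfac L1 hL1d (a 1)
    have h2 := hfac L2 hL2d (a 2)
    have hmul := totalDegree_mul
      ((∏ r ∈ Finset.range (a 0), (C 3 * L0 - C (r : ℝ))) *
        (∏ r ∈ Finset.range (a 1), (C 3 * L1 - C (r : ℝ))))
      (∏ r ∈ Finset.range (a 2), (C 3 * L2 - C (r : ℝ)))
    have hmul2 := totalDegree_mul (∏ r ∈ Finset.range (a 0), (C 3 * L0 - C (r : ℝ)))
      (∏ r ∈ Finset.range (a 1), (C 3 * L1 - C (r : ℝ)))
    have hC := totalDegree_mul (C (w a))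
      ((∏ r ∈ Finset.range (a 0), (C 3 * L0 - C (r : ℝ))) *
       (∏ r ∈ Finset.range (a 1), (C 3 * L1 - C (r : ℝ))) *
       (∏ r ∈ Finset.range (a 2), (C 3 * L2 - C (r : ℝ))))
    rw [totalDegree_C] at hC
    omega
  -- node values
  have hnode : ∀ bb ∈ Finset.Nat.antidiagonalTuple 3 3,
      eval (fun j => ((bb 0 : ℝ) * B 0 j + (bb 1 : ℝ) * B 1 j + (bb 2 : ℝ) * B 2 j) / 3) q
        = y bb := by
    intro bb hbb
    have hsb : bb 0 + bb 1 + bb 2 = 3 := by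
      have := Finset.Nat.mem_antidiagonalTuple.mp hbb
      rwa [Fin.sum_univ_three] at this
    have hsbR : (bb 0 : ℝ) + (bb 1 : ℝ) + (bb 2 : ℝ) = 3 := by exact_mod_cast hsb
    have ha2 : (bb 2 : ℝ) = 3 - (bb 0 : ℝ) - (bb 1 : ℝ) := by linarith
    have e0 : eval (fun j => ((bb 0 : ℝ) * B 0 j + (bb 1 : ℝ) * B 1 j + (bb 2 : ℝ) * B 2 j) / 3)
        L0 = (bb 0 : ℝ) / 3 := by
      rw [hL0]
      simp only [map_add, map_mul, eval_C, eval_X]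
      rw [ha2]
      field_simp
      linear_combination (bb 0 : ℝ) * mul_inv_cancel₀ hD
    have e1 : eval (fun j => ((bb 0 : ℝ) * B 0 j + (bb 1 : ℝ) * B 1 j + (bb 2 : ℝ) * B 2 j) / 3)
        L1 = (bb 1 : ℝ) / 3 := by
      rw [hL1]
      simp only [map_add, map_mul, eval_C, eval_X]
      rw [ha2]
      field_simp
      ring
    have e2 : eval (fun j => ((bb 0 : ℝ) * B 0 j + (bb 1 : ℝ) * B 1 j + (bb 2 : ℝ) * B 2 j) / 3)
        L2 = (bb 2 : ℝ) / 3 := by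
      rw [hL2]
      simp only [map_sub, map_one, eval_C, e0, e1]
      rw [ha2]
      ring
    rw [hqdef, map_sum]
    have term : ∀ a ∈ Finset.Nat.antidiagonalTuple 3 3,
        eval (fun j => ((bb 0 : ℝ) * B 0 j + (bb 1 : ℝ) * B 1 j + (bb 2 : ℝ) * B 2 j) / 3)
          (C (w a) *
            ((∏ r ∈ Finset.range (a 0), (C 3 * L0 - C (r : ℝ))) *
             (∏ r ∈ Finset.range (a 1), (C 3 * L1 - C (r : ℝ))) *
             (∏ r ∈ Finset.range (a 2), (C 3 * L2 - C (r : ℝ)))))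
        = w a * ((∏ r ∈ Finset.range (a 0), ((bb 0 : ℝ) - r)) *
            (∏ r ∈ Finset.range (a 1), ((bb 1 : ℝ) - r)) *
            (∏ r ∈ Finset.range (a 2), ((bb 2 : ℝ) - r))) := by
      intro a _
      simp only [map_mul, eval_C, map_prod, map_sub, e0, e1, e2,
        show (3 : ℝ) * ((bb 0 : ℝ) / 3) = (bb 0 : ℝ) from by ring,
        show (3 : ℝ) * ((bb 1 : ℝ) / 3) = (bb 1 : ℝ) from by ring,
        show (3 : ℝ) * ((bb 2 : ℝ) / 3) = (bb 2 : ℝ) from by ring]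
    rw [Finset.sum_congr rfl term]
    rw [Finset.sum_eq_single_of_mem bb hbb]
    · rw [prod_sub_cast15, prod_sub_cast15, prod_sub_cast15, hw]
      have hne : ((Nat.factorial (bb 0) : ℝ) * (Nat.factorial (bb 1)) * (Nat.factorial (bb 2)))
          ≠ 0 := by positivity
      field_simp
    · intro a ha hab
      have hk : ∃ k : Fin 3, bb k < a k := by
        by_contra hno
        push_neg at hno
        have hsa : a 0 + a 1 + a 2 = 3 := by
          have := Finset.Nat.mem_antidiagonalTuple.mp ha
          rwa [Fin.sum_univ_three] at this
        have h0 := hno 0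
        have h1 := hno 1
        have h2 := hno 2
        apply hab
        funext k
        fin_cases k
        · show a 0 = bb 0; omega
        · show a 1 = bb 1; omega
        · show a 2 = bb 2; omega
      obtain ⟨k, hk⟩ := hk
      fin_cases k
      · have hk' : bb 0 < a 0 := hk
        rw [Finset.prod_eq_zero (Finset.mem_range.mpr hk') (sub_self ((bb 0 : ℕ) : ℝ))]
        ring
      · have hk' : bb 1 < a 1 := hk
        rw [Finset.prod_eq_zero (Finset.mem_range.mpr hk') (sub_self ((bb 1 : ℕ) : ℝ))]
        ring
      · have hk' : bb 2 < a 2 := hk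
        rw [Finset.prod_eq_zero (Finset.mem_range.mpr hk') (sub_self ((bb 2 : ℕ) : ℝ))]
        ring
  -- conclusion
  refine ⟨fun x => eval x q, ⟨⟨q, hdeg, fun _ => rfl⟩, hnode⟩, ?_⟩
  rintro p' ⟨⟨q', hq'd, hq'e⟩, hn'⟩
  funext x
  show p' x = eval x q
  have hzero : ∀ a ∈ Finset.Nat.antidiagonalTuple 3 3,
      eval ![(a 0 : ℝ)/3 * B 0 0 + (a 1 : ℝ)/3 * B 1 0 + (a 2 : ℝ)/3 * B 2 0,
             (a 0 : ℝ)/3 * B 0 1 + (a 1 : ℝ)/3 * B 1 1 + (a 2 : ℝ)/3 * B 2 1] (q' - q) = 0 := by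
    intro a ha
    have hfun : (![(a 0 : ℝ)/3 * B 0 0 + (a 1 : ℝ)/3 * B 1 0 + (a 2 : ℝ)/3 * B 2 0,
        (a 0 : ℝ)/3 * B 0 1 + (a 1 : ℝ)/3 * B 1 1 + (a 2 : ℝ)/3 * B 2 1] : Fin 2 → ℝ)
        = fun j => ((a 0 : ℝ) * B 0 j + (a 1 : ℝ) * B 1 j + (a 2 : ℝ) * B 2 j) / 3 := by
      funext j
      fin_cases j <;>
        simp only [Fin.mk_zero, Fin.mk_one, Matrix.cons_val_zero, Matrix.cons_val_one,
          Matrix.head_cons] <;> ring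
    rw [hfun, map_sub, hnode a ha, ← hq'e, hn' a ha, sub_self]
  have hvan := vanish15 (B 0 0) (B 0 1) (B 1 0) (B 1 1) (B 2 0) (B 2 1) (q' - q)
      (le_trans (totalDegree_sub _ _) (max_le hq'd hdeg)) hzero
  have hx : (![(((x 0 - B 2 0) * (B 1 1 - B 2 1) - (x 1 - B 2 1) * (B 1 0 - B 2 0)) /
        ((B 0 0 - B 2 0) * (B 1 1 - B 2 1) - (B 0 1 - B 2 1) * (B 1 0 - B 2 0))) * B 0 0 +
        (((B 0 0 - B 2 0) * (x 1 - B 2 1) - (B 0 1 - B 2 1) * (x 0 - B 2 0)) /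
        ((B 0 0 - B 2 0) * (B 1 1 - B 2 1) - (B 0 1 - B 2 1) * (B 1 0 - B 2 0))) * B 1 0 +
        (1 - (((x 0 - B 2 0) * (B 1 1 - B 2 1) - (x 1 - B 2 1) * (B 1 0 - B 2 0)) /
        ((B 0 0 - B 2 0) * (B 1 1 - B 2 1) - (B 0 1 - B 2 1) * (B 1 0 - B 2 0))) -
        (((B 0 0 - B 2 0) * (x 1 - B 2 1) - (B 0 1 - B 2 1) * (x 0 - B 2 0)) /
        ((B 0 0 - B 2 0) * (B 1 1 - B 2 1) - (B 0 1 - B 2 1) * (B 1 0 - B 2 0)))) * B 2 0,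
        (((x 0 - B 2 0) * (B 1 1 - B 2 1) - (x 1 - B 2 1) * (B 1 0 - B 2 0)) /
        ((B 0 0 - B 2 0) * (B 1 1 - B 2 1) - (B 0 1 - B 2 1) * (B 1 0 - B 2 0))) * B 0 1 +
        (((B 0 0 - B 2 0) * (x 1 - B 2 1) - (B 0 1 - B 2 1) * (x 0 - B 2 0)) /
        ((B 0 0 - B 2 0) * (B 1 1 - B 2 1) - (B 0 1 - B 2 1) * (B 1 0 - B 2 0))) * B 1 1 +
        (1 - (((x 0 - B 2 0) * (B 1 1 - B 2 1) - (x 1 - B 2 1) * (B 1 0 - B 2 0)) /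
        ((B 0 0 - B 2 0) * (B 1 1 - B 2 1) - (B 0 1 - B 2 1) * (B 1 0 - B 2 0))) -
        (((B 0 0 - B 2 0) * (x 1 - B 2 1) - (B 0 1 - B 2 1) * (x 0 - B 2 0)) /
        ((B 0 0 - B 2 0) * (B 1 1 - B 2 1) - (B 0 1 - B 2 1) * (B 1 0 - B 2 0)))) * B 2 1]
        : Fin 2 → ℝ) = x := by
    funext j
    fin_cases j <;>
      simp only [Fin.mk_zero, Fin.mk_one, Matrix.cons_val_zero, Matrix.cons_val_one,
        Matrix.head_cons] <;>
      [(field_simp; linear_combination (x 0 - B 2 0) * mul_inv_cancel₀ hD);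
        (field_simp; linear_combination (x 1 - B 2 1) * mul_inv_cancel₀ hD)]
  have hz := hvan
    (((x 0 - B 2 0) * (B 1 1 - B 2 1) - (x 1 - B 2 1) * (B 1 0 - B 2 0)) /
      ((B 0 0 - B 2 0) * (B 1 1 - B 2 1) - (B 0 1 - B 2 1) * (B 1 0 - B 2 0)))
    (((B 0 0 - B 2 0) * (x 1 - B 2 1) - (B 0 1 - B 2 1) * (x 0 - B 2 0)) /
      ((B 0 0 - B 2 0) * (B 1 1 - B 2 1) - (B 0 1 - B 2 1) * (B 1 0 - B 2 0)))
  rw [hx, map_sub, sub_eq_zero] at hz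
  rw [hq'e x, hz]
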